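/- Let m ≥ 2, let Λ̃, Λ be real constants and μ a complex constant, and let λ₀(φ) = Σ_{k=−m−1}^{m+1} λ₀^{(2k)} e^{2ikφ} be the finite trigonometric sum with coefficients as in the almost-half-Einstein solution (λ₀^{(2m+2)} = (m!(m+1)!/(2(2m+2)!))·((2m+1)Λ − (2m+2)Λ̃) + μ, λ₀^{(2k)} = (2(2m+1)!/((m+1−k)!(m+1+k)!))·(k·λ₀^{(2m+2)} + (m+1−k)·Re(μ)) for 1 ≤ |k| ≤ m, λ₀^{(0)} = Λ/(2m+2) + (2(2m+1)!/(m!(m+1)!))·Re(μ), λ₀^{(−2k)} = conj(λ₀^{(2k)})). If λ₀ additionally satisfies tan(φ)·λ₀' − (2(m+1) − (2m+1)·sec²(φ))·λ₀ − Λ̃·sec²(φ) + Λ = 0 for all φ with cos φ ≠ 0, then Re(μ) = 0. -/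

import Mathlib

open Complex Finset


private lemma sum_zpow_aux' (N : ℕ) (a : ℤ) (ha : a ≠ 0) (haN : a.natAbs < N) :
    ∑ t ∈ Finset.range N, Complex.exp (2 * ((Real.pi * t / N : ℝ) : ℂ) * Complex.I) ^ a = 0 := by
  have hNpos : 0 < N := lt_of_le_of_lt (Nat.zero_le _) haN
  have hNC : (N : ℂ) ≠ 0 := Nat.cast_ne_zero.2 hNpos.ne'
  have hπ : (Real.pi : ℂ) ≠ 0 := by exact_mod_cast Real.pi_ne_zero
  set ζ : ℂ := Complex.exp (2 * Real.pi * Complex.I * a / N) with hζ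
  have key : ∀ t : ℕ, Complex.exp (2 * ((Real.pi * t / N : ℝ) : ℂ) * Complex.I) ^ a = ζ ^ t := by
    intro t
    rw [hζ, ← Complex.exp_int_mul, ← Complex.exp_nat_mul]
    congr 1
    push_cast
    ring
  rw [Finset.sum_congr rfl fun t _ => key t]
  have hζN : ζ ^ N = 1 := by
    rw [hζ, ← Complex.exp_nat_mul]
    have : (N : ℂ) * (2 * Real.pi * Complex.I * a / N) = a * (2 * Real.pi * Complex.I) := by
      field_simp
    rw [this, Complex.exp_int_mul_two_pi_mul_I]
  have hζ1 : ζ ≠ 1 := by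
    intro h
    obtain ⟨n, hn⟩ := Complex.exp_eq_one_iff.mp h
    have h2πI : (2 * (Real.pi : ℂ) * Complex.I) ≠ 0 := by
      simp [hπ, Complex.I_ne_zero]
    have haC : (a : ℂ) = (n * N : ℤ) := by
      field_simp at hn
      push_cast
      apply mul_left_cancel₀ h2πI
      linear_combination (2 * (Real.pi : ℂ) * Complex.I) * hn
    have haZ : a = n * N := by exact_mod_cast haC
    have hnab : a.natAbs = n.natAbs * N := by
      rw [haZ, Int.natAbs_mul]; simp
    have hn0 : n.natAbs ≠ 0 := by
      intro h0
      apply ha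
      rw [haZ]
      simp [Int.natAbs_eq_zero.mp h0]
    have : N ≤ a.natAbs := by
      rw [hnab]
      exact Nat.le_mul_of_pos_left N (Nat.pos_of_ne_zero hn0)
    omega
  rw [geom_sum_eq hζ1, hζN]
  simp

private lemma cos_pt_ne_zero' (m t : ℕ) : Real.cos (Real.pi * t / (2 * m + 5 : ℕ)) ≠ 0 := by
  intro h
  rw [Real.cos_eq_zero_iff] at h
  obtain ⟨n, hn⟩ := h
  have hN : ((2 * m + 5 : ℕ) : ℝ) ≠ 0 := by positivity
  have h2 : Real.pi * (2 * t) = Real.pi * ((2 * n + 1) * (2 * m + 5 : ℤ)) := by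
    field_simp at hn
    push_cast at hn ⊢
    linear_combination Real.pi * hn
  have h3 : (2 * t : ℝ) = ((2 * n + 1) * (2 * m + 5 : ℤ) : ℤ) := by
    have := mul_left_cancel₀ Real.pi_ne_zero h2
    push_cast
    push_cast at this
    linarith
  have h4 : (2 * t : ℤ) = (2 * n + 1) * (2 * m + 5) := by exact_mod_cast h3
  have ho : Odd ((2 * n + 1) * ((2 : ℤ) * m + 5)) :=
    (odd_two_mul_add_one n).mul ⟨(m : ℤ) + 2, by ring⟩
  obtain ⟨j, hj⟩ := ho
  omega

private lemma deriv_sum_exp' (S : Finset ℤ) (c : ℤ → ℂ) (φ : ℝ) :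
    deriv (fun ψ : ℝ => ∑ k ∈ S, c k * Complex.exp (2 * (k : ℂ) * Complex.I * ψ)) φ
      = ∑ k ∈ S, c k * (2 * (k : ℂ) * Complex.I * Complex.exp (2 * (k : ℂ) * Complex.I * φ)) := by
  apply HasDerivAt.deriv
  apply HasDerivAt.fun_sum
  intro k _
  have h1 : HasDerivAt (fun w : ℂ => Complex.exp (2 * (k : ℂ) * Complex.I * w))
      (Complex.exp (2 * (k : ℂ) * Complex.I * φ) * (2 * (k : ℂ) * Complex.I)) (φ : ℂ) := by
    simpa using ((hasDerivAt_id ((φ : ℝ) : ℂ)).const_mul (2 * (k : ℂ) * Complex.I)).cexp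
  have h2 := (h1.comp_ofReal).const_mul (c k)
  rw [show c k * (2 * (k : ℂ) * Complex.I * Complex.exp (2 * (k : ℂ) * Complex.I * φ)) =
      c k * (Complex.exp (2 * (k : ℂ) * Complex.I * φ) * (2 * (k : ℂ) * Complex.I)) by ring]
  exact h2

private lemma pointP' (m : ℕ) (S : Finset ℤ) (c : ℤ → ℂ) (Λt Λ : ℝ) (φ : ℝ)
    (hcos : Real.cos φ ≠ 0)
    (h : (Real.tan φ : ℂ) *
          (∑ k ∈ S, c k * (2 * (k : ℂ) * Complex.I * Complex.exp (2 * (k : ℂ) * Complex.I * φ)))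
        - (2 * ((m : ℂ) + 1) - (2 * (m : ℂ) + 1) / ((Real.cos φ : ℂ)) ^ 2) *
          (∑ k ∈ S, c k * Complex.exp (2 * (k : ℂ) * Complex.I * φ))
        - (Λt : ℂ) / ((Real.cos φ : ℂ)) ^ 2 + (Λ : ℂ) = 0) :
    ∑ k ∈ S, c k * (((k : ℂ) - ((m : ℂ) + 1)) / 2 * (Complex.exp (2 * (φ : ℂ) * Complex.I)) ^ (k + 1)
        + (m : ℂ) * (Complex.exp (2 * (φ : ℂ) * Complex.I)) ^ k
        + (-(k : ℂ) - ((m : ℂ) + 1)) / 2 * (Complex.exp (2 * (φ : ℂ) * Complex.I)) ^ (k - 1))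
      + (Λ : ℂ) / 4 * (Complex.exp (2 * (φ : ℂ) * Complex.I) + (Complex.exp (2 * (φ : ℂ) * Complex.I))⁻¹)
      + ((Λ : ℂ) / 2 - (Λt : ℂ)) = 0 := by
  set z : ℂ := Complex.exp (2 * (φ : ℂ) * Complex.I) with hzdef
  have hz0 : z ≠ 0 := Complex.exp_ne_zero _
  have hccne : Complex.cos (φ : ℂ) ≠ 0 := by
    rw [← Complex.ofReal_cos]
    exact Complex.ofReal_ne_zero.2 hcos
  have hzi : z⁻¹ = Complex.exp (-(2 * (φ : ℂ) * Complex.I)) := (Complex.exp_neg _).symm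
  have hexpk : ∀ k : ℤ, Complex.exp (2 * (k : ℂ) * Complex.I * (φ : ℂ)) = z ^ k := by
    intro k
    rw [hzdef, ← Complex.exp_int_mul]
    congr 1
    ring
  have h1 : z + z⁻¹ = 2 * Complex.cos (2 * (φ : ℂ)) := by
    rw [hzi, hzdef, show (2 * (φ : ℂ) * Complex.I) = (2 * (φ : ℂ)) * Complex.I by ring,
      show -((2 * (φ : ℂ)) * Complex.I) = (-(2 * (φ : ℂ))) * Complex.I by ring,
      Complex.exp_mul_I, Complex.exp_mul_I, Complex.cos_neg, Complex.sin_neg]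
    ring
  have h2 : z - z⁻¹ = 2 * Complex.sin (2 * (φ : ℂ)) * Complex.I := by
    rw [hzi, hzdef, show (2 * (φ : ℂ) * Complex.I) = (2 * (φ : ℂ)) * Complex.I by ring,
      show -((2 * (φ : ℂ)) * Complex.I) = (-(2 * (φ : ℂ))) * Complex.I by ring,
      Complex.exp_mul_I, Complex.exp_mul_I, Complex.cos_neg, Complex.sin_neg]
    ring
  have hc2 : Complex.cos (φ : ℂ) ^ 2 = (z + z⁻¹ + 2) / 4 := by
    rw [h1, Complex.cos_two_mul]
    ring
  have hsc : Complex.sin (φ : ℂ) * Complex.cos (φ : ℂ) = (z - z⁻¹) / (4 * Complex.I) := by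
    rw [h2, Complex.sin_two_mul]
    field_simp
    ring
  rw [Real.tan_eq_sin_div_cos] at h
  push_cast at h
  simp only [hexpk] at h
  have hE : Complex.sin (φ : ℂ) * Complex.cos (φ : ℂ) *
        (∑ k ∈ S, c k * (2 * (k : ℂ) * Complex.I * z ^ k))
      - (2 * ((m : ℂ) + 1) * Complex.cos (φ : ℂ) ^ 2 - (2 * (m : ℂ) + 1)) *
        (∑ k ∈ S, c k * z ^ k)
      - (Λt : ℂ) + (Λ : ℂ) * Complex.cos (φ : ℂ) ^ 2 = 0 := by
    have hmul : (Complex.sin (φ : ℂ) * Complex.cos (φ : ℂ) *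
          (∑ k ∈ S, c k * (2 * (k : ℂ) * Complex.I * z ^ k))
        - (2 * ((m : ℂ) + 1) * Complex.cos (φ : ℂ) ^ 2 - (2 * (m : ℂ) + 1)) *
          (∑ k ∈ S, c k * z ^ k)
        - (Λt : ℂ) + (Λ : ℂ) * Complex.cos (φ : ℂ) ^ 2) * Complex.cos (φ : ℂ) ^ 3 = 0 := by
      field_simp [hccne] at h
      rw [show ∑ x ∈ S, c x * 2 * (x : ℂ) * Complex.I * z ^ x = ∑ k ∈ S, c k * (2 * (k : ℂ) * Complex.I * z ^ k) from
        Finset.sum_congr rfl fun _ _ => by ring] at h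
      linear_combination Complex.cos (φ : ℂ) ^ 3 * h
    exact (mul_eq_zero.mp hmul).resolve_right (pow_ne_zero 3 hccne)
  have h1t : ∀ k ∈ S,
      c k * (((k : ℂ) - ((m : ℂ) + 1)) / 2 * z ^ (k + 1) + (m : ℂ) * z ^ k
          + (-(k : ℂ) - ((m : ℂ) + 1)) / 2 * z ^ (k - 1))
      = Complex.sin (φ : ℂ) * Complex.cos (φ : ℂ) * (c k * (2 * (k : ℂ) * Complex.I * z ^ k))
        - (2 * ((m : ℂ) + 1) * Complex.cos (φ : ℂ) ^ 2 - (2 * (m : ℂ) + 1)) * (c k * z ^ k) := by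
    intro k _
    rw [hsc, hc2, zpow_add_one₀ hz0, zpow_sub_one₀ hz0]
    field_simp
    ring
  rw [Finset.sum_congr rfl h1t, Finset.sum_sub_distrib, ← Finset.mul_sum, ← Finset.mul_sum]
  linear_combination hE - (Λ : ℂ) * hc2




/-- The top Fourier coefficient `λ₀^{(2m+2)}`. -/
noncomputable def topCoeff (m : ℕ) (Λt Λ : ℝ) (μ : ℂ) : ℂ :=
  ((m.factorial * (m + 1).factorial : ℕ) : ℂ) /
      (2 * ((2 * m + 2).factorial : ℕ)) *
    ((2 * m + 1) * (Λ : ℂ) - (2 * m + 2) * (Λt : ℂ)) + μ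

/-- The Fourier coefficients `λ₀^{(2k)}`, for `k = -(m+1), …, m+1`. -/
noncomputable def lamCoeff (m : ℕ) (Λt Λ : ℝ) (μ : ℂ) (k : ℤ) : ℂ :=
  if k = (m : ℤ) + 1 then topCoeff m Λt Λ μ
  else if k = -((m : ℤ) + 1) then (starRingEnd ℂ) (topCoeff m Λt Λ μ)
  else if k = 0 then
    ((Λ : ℂ) / (2 * m + 2)) +
      (2 * (((2 * m + 1).factorial : ℕ) : ℂ) /
        ((m.factorial * (m + 1).factorial : ℕ) : ℂ)) * (μ.re : ℂ)
  else
    (2 * (((2 * m + 1).factorial : ℕ) : ℂ)) /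
        (((((m : ℤ) + 1 - k).toNat.factorial : ℕ) : ℂ) *
          ((((m : ℤ) + 1 + k).toNat.factorial : ℕ) : ℂ)) *
      ((k : ℂ) * topCoeff m Λt Λ μ + (((m : ℤ) + 1 - k : ℤ) : ℂ) * (μ.re : ℂ))

/-- If the almost-half-Einstein solution `λ₀` additionally solves the
first-order (Einstein) ODE, then `Re μ = 0`. -/
theorem stmt_12 (m : ℕ) (hm : 2 ≤ m) (Λt Λ : ℝ) (μ : ℂ)
    (lam0 : ℝ → ℂ)
    (hlam0 : ∀ φ : ℝ, lam0 φ =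
      ∑ k ∈ Finset.Icc (-((m : ℤ) + 1)) ((m : ℤ) + 1),
        lamCoeff m Λt Λ μ k * Complex.exp (2 * (k : ℂ) * Complex.I * φ))
    (hode : ∀ φ : ℝ, Real.cos φ ≠ 0 →
      (Real.tan φ : ℂ) * deriv lam0 φ
        - (2 * ((m : ℂ) + 1)
            - (2 * (m : ℂ) + 1) / ((Real.cos φ : ℂ)) ^ 2) * lam0 φ
        - (Λt : ℂ) / ((Real.cos φ : ℂ)) ^ 2 + (Λ : ℂ) = 0) :
    μ.re = 0 := by
  classical
  set S : Finset ℤ := Finset.Icc (-((m : ℤ) + 1)) ((m : ℤ) + 1) with hSdef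
  set c : ℤ → ℂ := lamCoeff m Λt Λ μ with hcdef
  have hfun : lam0 = fun ψ : ℝ => ∑ k ∈ S, c k * Complex.exp (2 * (k : ℂ) * Complex.I * ψ) :=
    funext hlam0
  have hode' : ∀ φ : ℝ, Real.cos φ ≠ 0 →
      (Real.tan φ : ℂ) *
          (∑ k ∈ S, c k * (2 * (k : ℂ) * Complex.I * Complex.exp (2 * (k : ℂ) * Complex.I * φ)))
        - (2 * ((m : ℂ) + 1) - (2 * (m : ℂ) + 1) / ((Real.cos φ : ℂ)) ^ 2) *
          (∑ k ∈ S, c k * Complex.exp (2 * (k : ℂ) * Complex.I * φ))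
        - (Λt : ℂ) / ((Real.cos φ : ℂ)) ^ 2 + (Λ : ℂ) = 0 := by
    intro φ hcφ
    have h0 := hode φ hcφ
    rw [hfun] at h0
    rw [deriv_sum_exp'] at h0
    exact h0
  set z : ℕ → ℂ := fun t =>
    Complex.exp (2 * ((Real.pi * t / ((2 * m + 5 : ℕ) : ℝ) : ℝ) : ℂ) * Complex.I) with hzdef
  have hz0 : ∀ t, z t ≠ 0 := fun t => Complex.exp_ne_zero _
  have hT : ∀ a : ℤ, a ≠ 0 → a.natAbs < 2 * m + 5 →
      ∑ t ∈ Finset.range (2 * m + 5), (z t) ^ a = 0 := by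
    intro a ha haN
    simpa [hzdef] using sum_zpow_aux' (2 * m + 5) a ha haN
  have hP : ∀ t : ℕ,
      ∑ k ∈ S, c k * (((k : ℂ) - ((m : ℂ) + 1)) / 2 * (z t) ^ (k + 1)
          + (m : ℂ) * (z t) ^ k + (-(k : ℂ) - ((m : ℂ) + 1)) / 2 * (z t) ^ (k - 1))
        + (Λ : ℂ) / 4 * (z t + (z t)⁻¹) + ((Λ : ℂ) / 2 - (Λt : ℂ)) = 0 := by
    intro t
    have hco : Real.cos (Real.pi * t / ((2 * m + 5 : ℕ) : ℝ)) ≠ 0 := cos_pt_ne_zero' m t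
    exact pointP' m S c Λt Λ _ hco (hode' _ hco)
  have hsum0 : ∑ t ∈ Finset.range (2 * m + 5),
      (∑ k ∈ S, c k * (((k : ℂ) - ((m : ℂ) + 1)) / 2 * (z t) ^ (k + 1)
          + (m : ℂ) * (z t) ^ k + (-(k : ℂ) - ((m : ℂ) + 1)) / 2 * (z t) ^ (k - 1))
        + (Λ : ℂ) / 4 * (z t + (z t)⁻¹) + ((Λ : ℂ) / 2 - (Λt : ℂ))) * (z t) ^ (-((m : ℤ) + 1)) = 0 :=
    Finset.sum_eq_zero fun t _ => by rw [hP t, zero_mul]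
  have hexpand : ∀ t ∈ Finset.range (2 * m + 5),
      (∑ k ∈ S, c k * (((k : ℂ) - ((m : ℂ) + 1)) / 2 * (z t) ^ (k + 1)
          + (m : ℂ) * (z t) ^ k + (-(k : ℂ) - ((m : ℂ) + 1)) / 2 * (z t) ^ (k - 1))
        + (Λ : ℂ) / 4 * (z t + (z t)⁻¹) + ((Λ : ℂ) / 2 - (Λt : ℂ))) * (z t) ^ (-((m : ℤ) + 1))
      = (∑ k ∈ S, (c k * (((k : ℂ) - ((m : ℂ) + 1)) / 2) * (z t) ^ (k - (m : ℤ))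
            + c k * (m : ℂ) * (z t) ^ (k - ((m : ℤ) + 1))
            + c k * ((-(k : ℂ) - ((m : ℂ) + 1)) / 2) * (z t) ^ (k - ((m : ℤ) + 2))))
        + ((Λ : ℂ) / 4 * (z t) ^ (-(m : ℤ)) + (Λ : ℂ) / 4 * (z t) ^ (-((m : ℤ) + 2))
            + ((Λ : ℂ) / 2 - (Λt : ℂ)) * (z t) ^ (-((m : ℤ) + 1))) := by
    intro t _
    have hzadd : ∀ a b : ℤ, (z t) ^ (a + b) = (z t) ^ a * (z t) ^ b :=
      fun a b => zpow_add₀ (hz0 t) a b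
    have e1 : ∀ k : ℤ, (z t) ^ (k - (m : ℤ)) = (z t) ^ (k + 1) * (z t) ^ (-((m : ℤ) + 1)) := by
      intro k; rw [← hzadd]; congr 1; ring
    have e2 : ∀ k : ℤ, (z t) ^ (k - ((m : ℤ) + 1)) = (z t) ^ k * (z t) ^ (-((m : ℤ) + 1)) := by
      intro k; rw [← hzadd]; congr 1
    have e3 : ∀ k : ℤ, (z t) ^ (k - ((m : ℤ) + 2)) = (z t) ^ (k - 1) * (z t) ^ (-((m : ℤ) + 1)) := by
      intro k; rw [← hzadd]; congr 1; ring
    have e4 : (z t) ^ (-(m : ℤ)) = (z t) * (z t) ^ (-((m : ℤ) + 1)) := by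
      rw [show (-(m : ℤ)) = 1 + (-((m : ℤ) + 1)) by ring, hzadd, zpow_one]
    have e5 : (z t) ^ (-((m : ℤ) + 2)) = (z t)⁻¹ * (z t) ^ (-((m : ℤ) + 1)) := by
      rw [show (-((m : ℤ) + 2)) = (-1) + (-((m : ℤ) + 1)) by ring, hzadd, zpow_neg_one]
    have hterm : ∀ k ∈ S,
        (c k * (((k : ℂ) - ((m : ℂ) + 1)) / 2 * (z t) ^ (k + 1)
          + (m : ℂ) * (z t) ^ k + (-(k : ℂ) - ((m : ℂ) + 1)) / 2 * (z t) ^ (k - 1)))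
            * (z t) ^ (-((m : ℤ) + 1))
        = c k * (((k : ℂ) - ((m : ℂ) + 1)) / 2) * (z t) ^ (k - (m : ℤ))
            + c k * (m : ℂ) * (z t) ^ (k - ((m : ℤ) + 1))
            + c k * ((-(k : ℂ) - ((m : ℂ) + 1)) / 2) * (z t) ^ (k - ((m : ℤ) + 2)) := by
      intro k _
      rw [e1 k, e2 k, e3 k]
      ring
    rw [add_mul, add_mul, Finset.sum_mul, Finset.sum_congr rfl hterm, e4, e5]
    ring
  rw [Finset.sum_congr rfl hexpand, Finset.sum_add_distrib, Finset.sum_comm] at hsum0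
  have hval1 : ∀ k ∈ S, ∑ t ∈ Finset.range (2 * m + 5),
      (c k * (((k : ℂ) - ((m : ℂ) + 1)) / 2) * (z t) ^ (k - (m : ℤ))
        + c k * (m : ℂ) * (z t) ^ (k - ((m : ℤ) + 1))
        + c k * ((-(k : ℂ) - ((m : ℂ) + 1)) / 2) * (z t) ^ (k - ((m : ℤ) + 2)))
      = c k * (((k : ℂ) - ((m : ℂ) + 1)) / 2) * (∑ t ∈ Finset.range (2 * m + 5), (z t) ^ (k - (m : ℤ)))
        + c k * (m : ℂ) * (∑ t ∈ Finset.range (2 * m + 5), (z t) ^ (k - ((m : ℤ) + 1)))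
        + c k * ((-(k : ℂ) - ((m : ℂ) + 1)) / 2) *
            (∑ t ∈ Finset.range (2 * m + 5), (z t) ^ (k - ((m : ℤ) + 2))) := by
    intro k _
    rw [Finset.sum_add_distrib, Finset.sum_add_distrib, ← Finset.mul_sum, ← Finset.mul_sum,
      ← Finset.mul_sum]
  rw [Finset.sum_congr rfl hval1, Finset.sum_add_distrib, Finset.sum_add_distrib] at hsum0
  have hmS : (m : ℤ) ∈ S := by
    rw [hSdef, Finset.mem_Icc]; omega
  have hm1S : (m : ℤ) + 1 ∈ S := by
    rw [hSdef, Finset.mem_Icc]; omega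
  have hS1 : ∑ k ∈ S, c k * (((k : ℂ) - ((m : ℂ) + 1)) / 2) *
        (∑ t ∈ Finset.range (2 * m + 5), (z t) ^ (k - (m : ℤ)))
      = c (m : ℤ) * ((((m : ℤ) : ℂ) - ((m : ℂ) + 1)) / 2) * ((2 * m + 5 : ℕ) : ℂ) := by
    rw [Finset.sum_eq_single_of_mem (m : ℤ) hmS (fun k hk hne => by
      rw [hT (k - (m : ℤ)) (by omega) (by
        rw [hSdef, Finset.mem_Icc] at hk; omega), mul_zero])]
    rw [show ((m : ℤ) - (m : ℤ)) = 0 from sub_self _]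
    simp
  have hS2 : ∑ k ∈ S, c k * (m : ℂ) *
        (∑ t ∈ Finset.range (2 * m + 5), (z t) ^ (k - ((m : ℤ) + 1)))
      = c ((m : ℤ) + 1) * (m : ℂ) * ((2 * m + 5 : ℕ) : ℂ) := by
    rw [Finset.sum_eq_single_of_mem ((m : ℤ) + 1) hm1S (fun k hk hne => by
      rw [hT (k - ((m : ℤ) + 1)) (by omega) (by
        rw [hSdef, Finset.mem_Icc] at hk; omega), mul_zero])]
    rw [show ((m : ℤ) + 1 - ((m : ℤ) + 1)) = 0 from sub_self _]
    simp
  have hS3 : ∑ k ∈ S, c k * ((-(k : ℂ) - ((m : ℂ) + 1)) / 2) *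
        (∑ t ∈ Finset.range (2 * m + 5), (z t) ^ (k - ((m : ℤ) + 2))) = 0 := by
    apply Finset.sum_eq_zero
    intro k hk
    rw [hT (k - ((m : ℤ) + 2)) (by
        rw [hSdef, Finset.mem_Icc] at hk; omega) (by
        rw [hSdef, Finset.mem_Icc] at hk; omega), mul_zero]
  have hG : ∑ t ∈ Finset.range (2 * m + 5),
      ((Λ : ℂ) / 4 * (z t) ^ (-(m : ℤ)) + (Λ : ℂ) / 4 * (z t) ^ (-((m : ℤ) + 2))
        + ((Λ : ℂ) / 2 - (Λt : ℂ)) * (z t) ^ (-((m : ℤ) + 1))) = 0 := by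
    rw [Finset.sum_add_distrib, Finset.sum_add_distrib, ← Finset.mul_sum, ← Finset.mul_sum,
      ← Finset.mul_sum, hT (-(m : ℤ)) (by omega) (by omega),
      hT (-((m : ℤ) + 2)) (by omega) (by omega), hT (-((m : ℤ) + 1)) (by omega) (by omega)]
    simp
  rw [hS1, hS2, hS3, hG] at hsum0
  have hNC : ((2 * m + 5 : ℕ) : ℂ) ≠ 0 := Nat.cast_ne_zero.2 (by omega)
  have hkey : c (m : ℤ) = 2 * (m : ℂ) * c ((m : ℤ) + 1) := by
    have h' : ((2 * m + 5 : ℕ) : ℂ) * (c (m : ℤ) - 2 * (m : ℂ) * c ((m : ℤ) + 1)) = 0 := by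
      push_cast at hsum0 ⊢
      linear_combination (-2 : ℂ) * hsum0
    have h2 := (mul_eq_zero.mp h').resolve_left hNC
    linear_combination h2
  have hc1 : c ((m : ℤ) + 1) = topCoeff m Λt Λ μ := by
    rw [hcdef]; simp [lamCoeff]
  have hcm : c (m : ℤ) = 2 * ((m : ℂ) * topCoeff m Λt Λ μ + (μ.re : ℂ)) := by
    rw [hcdef]
    unfold lamCoeff
    rw [if_neg (by omega), if_neg (by omega), if_neg (by
      intro h
      have : m = 0 := by exact_mod_cast h
      omega)]
    have e1 : ((m : ℤ) + 1 - (m : ℤ)) = 1 := by ring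
    have e2 : ((m : ℤ) + 1 + (m : ℤ)).toNat = 2 * m + 1 := by omega
    rw [e1, e2]
    norm_num [Nat.factorial]
    left
    have hx : (2 * (m : ℂ) + 1) * ((2 * m).factorial : ℂ) ≠ 0 := by
      apply mul_ne_zero
      · have : ((2 * m + 1 : ℕ) : ℂ) ≠ 0 := Nat.cast_ne_zero.2 (by omega)
        push_cast at this
        convert this using 2
      · exact Nat.cast_ne_zero.2 (Nat.factorial_ne_zero _)
    rw [mul_div_assoc, div_self hx, mul_one]
  rw [hcm, hc1] at hkey
  have hfin : (μ.re : ℂ) = 0 := by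
    push_cast at hkey
    linear_combination hkey / 2
  exact_mod_cast hfin
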